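/- arXiv:1401.8135 — 6 statements merged into one kernel-verified Lean document; each statement's English description precedes it below -/
import Mathlib

section
/- For a monotone Boolean function f on N = {1,...,n}, if U is a minimal upper set of f, then the number of maximal lower sets of f is at least |U|. -/
open Finset

/-- A monotone Boolean function on subsets of `{0,…,n-1}`. -/
def MonoBF {n : ℕ} (f : Finset (Fin n) → Bool) : Prop :=
  ∀ ⦃S T : Finset (Fin n)⦄, S ⊆ T → f S ≤ f T

/-- `S` is a minimal upper set of `f`: `f S = 1` and every proper subset has value `0`. -/
def IsMinUpper {n : ℕ} (f : Finset (Fin n) → Bool) (S : Finset (Fin n)) : Prop :=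
  f S = true ∧ ∀ T : Finset (Fin n), T ⊂ S → f T = false

/-- `S` is a maximal lower set of `f`: `f S = 0` and every proper superset has value `1`. -/
def IsMaxLower {n : ℕ} (f : Finset (Fin n) → Bool) (S : Finset (Fin n)) : Prop :=
  f S = false ∧ ∀ T : Finset (Fin n), S ⊂ T → f T = true

instance {n : ℕ} (f : Finset (Fin n) → Bool) : DecidablePred (IsMinUpper f) := by
  intro S; unfold IsMinUpper; infer_instance

instance {n : ℕ} (f : Finset (Fin n) → Bool) : DecidablePred (IsMaxLower f) := by
  intro S; unfold IsMaxLower; infer_instance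

/-- The family `𝒰(f)` of minimal upper sets. -/
def upperSets {n : ℕ} (f : Finset (Fin n) → Bool) : Finset (Finset (Fin n)) :=
  univ.filter (IsMinUpper f)

/-- The family `ℒ(f)` of maximal lower sets. -/
def lowerSets {n : ℕ} (f : Finset (Fin n) → Bool) : Finset (Finset (Fin n)) :=
  univ.filter (IsMaxLower f)

/-- `m(f) = |𝒰(f) ∪ ℒ(f)|`. -/
def mUL {n : ℕ} (f : Finset (Fin n) → Bool) : ℕ :=
  (upperSets f ∪ lowerSets f).card

instance {n : ℕ} : DecidablePred (fun f : Finset (Fin n) → Bool => MonoBF f) := by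
  intro f; unfold MonoBF; infer_instance

/-- `b_j(n)`: the number of monotone Boolean functions on `n` variables with `m(f) = j`. -/
def bCount (n j : ℕ) : ℕ :=
  (univ.filter (fun f : Finset (Fin n) → Bool => MonoBF f ∧ mUL f = j)).card

/-- A deterministic reconstruction algorithm as a binary decision tree: internal nodes
query `f S`, the left branch corresponds to answer `0`, leaves output a function. -/
inductive DTree (n : ℕ) where
  | leaf : (Finset (Fin n) → Bool) → DTree n
  | node : Finset (Fin n) → DTree n → DTree n → DTree n

/-- The function output by the tree on input `f`. -/
def DTree.run {n : ℕ} : DTree n → (Finset (Fin n) → Bool) → (Finset (Fin n) → Bool)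
  | .leaf g, _ => g
  | .node S t0 t1, f => if f S then t1.run f else t0.run f

/-- `A(f)`: the number of queries asked on input `f`. -/
def DTree.cost {n : ℕ} : DTree n → (Finset (Fin n) → Bool) → ℕ
  | .leaf _, _ => 0
  | .node S t0 t1, f => (if f S then t1.cost f else t0.cost f) + 1

/-- The tree correctly reconstructs every monotone Boolean function. -/
def Reconstructs {n : ℕ} (t : DTree n) : Prop :=
  ∀ f : Finset (Fin n) → Bool, MonoBF f → t.run f = f

/-- The tree is `c`-competitive: `A(f) ≤ c · m(f)` for every monotone `f`. -/
def Competitive {n : ℕ} (t : DTree n) (c : ℝ) : Prop :=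
  ∀ f : Finset (Fin n) → Bool, MonoBF f → (t.cost f : ℝ) ≤ c * mUL f

/-- `c*_n`, the optimal competitivity on `n` variables. -/
noncomputable def cStar (n : ℕ) : ℝ :=
  sInf {c : ℝ | ∃ t : DTree n, Reconstructs t ∧ Competitive t c}

private lemma exists_maxlower {n : ℕ} (f : Finset (Fin n) → Bool)
    (S : Finset (Fin n)) (hS : f S = false) :
    ∃ L, IsMaxLower f L ∧ S ⊆ L := by
  classical
  set 𝒯 := (univ : Finset (Finset (Fin n))).filter (fun T => S ⊆ T ∧ f T = false) with h𝒯
  have hne : 𝒯.Nonempty := ⟨S, by simp [h𝒯, hS]⟩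
  obtain ⟨L, hL, hmax⟩ := 𝒯.exists_max_image Finset.card hne
  simp only [h𝒯, mem_filter, mem_univ, true_and] at hL
  refine ⟨L, ⟨hL.2, ?_⟩, hL.1⟩
  intro T hLT
  by_contra h
  have hTF : f T = false := by
    cases hfT : f T with
    | false => rfl
    | true => exact absurd hfT h
  have hT𝒯 : T ∈ 𝒯 := by
    simp only [h𝒯, mem_filter, mem_univ, true_and]
    exact ⟨hL.1.trans hLT.subset, hTF⟩
  have := hmax T hT𝒯
  have := Finset.card_lt_card hLT
  omega

/-- If `U` is a minimal upper set of a monotone `f`, then `|ℒ(f)| ≥ |U|`. -/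
theorem stmt1 {n : ℕ} (f : Finset (Fin n) → Bool) (hf : MonoBF f)
    (U : Finset (Fin n)) (hU : IsMinUpper f U) :
    U.card ≤ (lowerSets f).card := by
  classical
  have hfe : ∀ i ∈ U, f (U.erase i) = false := fun i hi =>
    hU.2 _ (Finset.erase_ssubset hi)
  choose! g hg1 hg2 using fun i (hi : i ∈ U) =>
    exists_maxlower f (U.erase i) (hfe i hi)
  apply Finset.card_le_card_of_injOn g
  · intro i hi
    simp only [lowerSets, mem_coe, mem_filter, mem_univ, true_and]
    exact hg1 i hi
  · intro i hi j hj hij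
    by_contra hne
    have hUL : U ⊆ g i := by
      intro x hx
      rcases eq_or_ne x i with rfl | hxi
      · have : x ∈ U.erase j := Finset.mem_erase.mpr ⟨hne, hx⟩
        exact hij ▸ hg2 j hj this
      · exact hg2 i hi (Finset.mem_erase.mpr ⟨hxi, hx⟩)
    have := hf hUL
    rw [hU.1, (hg1 i hi).1] at this
    exact (by decide : ¬ (true ≤ false)) this
end

section
/- For every 1 ≤ i ≤ n, the number b_{i+1}(n) of monotone Boolean functions f on n variables with m(f) = i+1 is at least binomial(n, i). -/
open Finset

def fS {n : ℕ} (S : Finset (Fin n)) : Finset (Fin n) → Bool :=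
  fun T => decide (S ∩ T).Nonempty

lemma fS_true {n : ℕ} (S T : Finset (Fin n)) : fS S T = true ↔ (S ∩ T).Nonempty := by
  simp [fS]

lemma fS_mono {n : ℕ} (S : Finset (Fin n)) : MonoBF (fS S) := by
  intro T T' h
  rcases Bool.eq_false_or_eq_true (fS S T) with hT | hT
  · rw [hT]
    have hT := (fS_true S T).1 hT
    rw [Bool.le_iff_imp]
    intro _
    rw [fS_true]
    obtain ⟨x, hx⟩ := hT
    exact ⟨x, mem_inter.2 ⟨(mem_inter.1 hx).1, h (mem_inter.1 hx).2⟩⟩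
  · rw [hT]; exact Bool.false_le _

lemma upperSets_fS {n : ℕ} (S : Finset (Fin n)) :
    upperSets (fS S) = S.image ({·}) := by
  ext T
  simp only [upperSets, mem_filter, mem_univ, true_and, mem_image, IsMinUpper]
  constructor
  · rintro ⟨h1, h2⟩
    rw [fS_true] at h1
    obtain ⟨s, hs⟩ := h1
    have hsS := (mem_inter.1 hs).1
    have hsT := (mem_inter.1 hs).2
    refine ⟨s, hsS, ?_⟩
    by_contra hne
    have hsub : {s} ⊂ T := (ssubset_iff_of_subset (singleton_subset_iff.2 hsT)).2
      (by
        by_contra hall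
        push_neg at hall
        apply hne
        apply (Subset.antisymm _ (singleton_subset_iff.2 hsT)).symm
        intro x hx
        exact hall x hx)
    have := h2 _ hsub
    rw [fS, decide_eq_false_iff_not, not_nonempty_iff_eq_empty] at this
    exact absurd this (ne_empty_of_mem (mem_inter.2 ⟨hsS, mem_singleton_self s⟩))
  · rintro ⟨s, hsS, rfl⟩
    constructor
    · rw [fS_true]; exact ⟨s, mem_inter.2 ⟨hsS, mem_singleton_self s⟩⟩
    · intro T hT
      have : T = ∅ := by
        rcases subset_singleton_iff.1 hT.subset with h | h
        · exact h
        · exact absurd h (by intro h; exact hT.ne h)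
      subst this
      simp [fS]

lemma lowerSets_fS {n : ℕ} (S : Finset (Fin n)) :
    lowerSets (fS S) = {Sᶜ} := by
  ext T
  simp only [lowerSets, mem_filter, mem_univ, true_and, mem_singleton, IsMaxLower]
  constructor
  · rintro ⟨h1, h2⟩
    have hdis : S ∩ T = ∅ := by
      by_contra h
      rw [fS, decide_eq_false_iff_not, not_nonempty_iff_eq_empty] at h1
      exact h h1
    have hsub : T ⊆ Sᶜ := by
      intro x hx
      simp only [mem_compl]
      intro hxS
      exact absurd hdis (ne_empty_of_mem (mem_inter.2 ⟨hxS, hx⟩))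
    rcases eq_or_lt_of_le hsub with h | h
    · exact h
    · have := h2 _ h
      rw [fS_true] at this
      obtain ⟨x, hx⟩ := this
      have := mem_inter.1 hx
      simp at this
  · rintro rfl
    constructor
    · rw [fS, decide_eq_false_iff_not, not_nonempty_iff_eq_empty]
      ext x; simp
    · intro T hT
      rw [fS_true]
      obtain ⟨x, hxT, hxc⟩ := exists_of_ssubset hT
      simp only [mem_compl, not_not] at hxc
      exact ⟨x, mem_inter.2 ⟨hxc, hxT⟩⟩

lemma mUL_fS {n : ℕ} (S : Finset (Fin n)) : mUL (fS S) = S.card + 1 := by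
  rw [mUL, upperSets_fS, lowerSets_fS]
  rw [card_union_of_disjoint, card_image_of_injective _ (fun a b => by simp), card_singleton]
  rw [disjoint_singleton_right, mem_image]
  rintro ⟨s, hsS, hs⟩
  have : s ∈ Sᶜ := hs ▸ mem_singleton_self s
  simp only [mem_compl] at this
  exact this hsS

lemma fS_inj {n : ℕ} {S S' : Finset (Fin n)} (h : fS S = fS S') : S = S' := by
  ext s
  have key : ∀ A : Finset (Fin n), s ∈ A ↔ fS A {s} = true := by
    intro A
    rw [fS_true]
    constructor
    · intro hs; exact ⟨s, mem_inter.2 ⟨hs, mem_singleton_self s⟩⟩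
    · rintro ⟨x, hx⟩
      have := mem_inter.1 hx
      exact mem_singleton.1 this.2 ▸ this.1
  rw [key S, key S', h]

/-- `b_{i+1}(n) ≥ C(n, i)` for all `1 ≤ i ≤ n`. -/
theorem stmt3 (n i : ℕ) (h1 : 1 ≤ i) (h2 : i ≤ n) :
    n.choose i ≤ bCount n (i + 1) := by
  classical
  have hcard : (powersetCard i (univ : Finset (Fin n))).card = n.choose i := by
    rw [card_powersetCard, card_univ, Fintype.card_fin]
  rw [← hcard, bCount]
  apply card_le_card_of_injOn fS
  · intro S hS
    rw [mem_coe, mem_powersetCard] at hS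
    simp only [mem_coe, mem_filter, mem_univ, true_and]
    exact ⟨fS_mono S, by rw [mUL_fS, hS.2]⟩
  · intro S _ S' _ h
    exact fS_inj h
end

section
/- There are exactly 2·binomial(n,2) monotone Boolean functions f on n variables with m(f) = 3, i.e. b_3(n) = 2·C(n,2). -/
open Finset

section
variable {n : ℕ}

/-! auxiliary -/

def g1 (P : Finset (Fin n)) : Finset (Fin n) → Bool := fun T => decide (P ⊆ T)
def g2 (P : Finset (Fin n)) : Finset (Fin n) → Bool := fun T => decide ((P ∩ T).Nonempty)

lemma mono_g1 (P : Finset (Fin n)) : MonoBF (g1 P) := by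
  intro S T hST
  by_cases h : P ⊆ S
  · simp [g1, h, h.trans hST]
  · simp [g1, h]

lemma mono_g2 (P : Finset (Fin n)) : MonoBF (g2 P) := by
  intro S T hST
  by_cases h : (P ∩ S).Nonempty
  · have : (P ∩ T).Nonempty := h.mono (inter_subset_inter le_rfl hST)
    simp [g2, h, this]
  · simp [g2, h]

lemma mem_upperSets {f : Finset (Fin n) → Bool} {S : Finset (Fin n)} :
    S ∈ upperSets f ↔ IsMinUpper f S := by simp [upperSets]
lemma mem_lowerSets {f : Finset (Fin n) → Bool} {S : Finset (Fin n)} :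
    S ∈ lowerSets f ↔ IsMaxLower f S := by simp [lowerSets]

lemma upper_g1 (P : Finset (Fin n)) : upperSets (g1 P) = {P} := by
  ext S
  simp only [mem_upperSets, mem_singleton, IsMinUpper, g1, decide_eq_true_eq,
    decide_eq_false_iff_not]
  constructor
  · rintro ⟨h1, h2⟩
    by_contra hne
    exact h2 P (lt_of_le_of_ne h1 (Ne.symm hne)) le_rfl
  · rintro rfl
    exact ⟨le_rfl, fun T hT => hT.not_subset⟩

lemma lower_g1 (P : Finset (Fin n)) :
    lowerSets (g1 P) = P.image (fun x => univ.erase x) := by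
  ext S
  simp only [mem_lowerSets, IsMaxLower, g1, decide_eq_true_eq, decide_eq_false_iff_not,
    mem_image]
  constructor
  · rintro ⟨h1, h2⟩
    obtain ⟨x, hxP, hxS⟩ := not_subset.mp h1
    refine ⟨x, hxP, ?_⟩
    have hsub : S ⊆ univ.erase x := fun y hy =>
      mem_erase.mpr ⟨fun h => hxS (h ▸ hy), mem_univ y⟩
    rcases eq_or_ssubset_of_subset hsub with h | h
    · exact h.symm
    · exact absurd (h2 _ h) (by
        intro hc
        exact (mem_erase.mp (hc hxP)).1 rfl)
  · rintro ⟨x, hxP, rfl⟩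
    constructor
    · intro hc
      exact (mem_erase.mp (hc hxP)).1 rfl
    · intro T hT
      have : T = univ := eq_univ_of_card _ (le_antisymm (card_le_univ T) (by
        have h1 : univ.erase x ⊂ T := hT
        have := card_lt_card h1
        have h2 : (univ.erase x).card = Fintype.card (Fin n) - 1 := by
          rw [card_erase_of_mem (mem_univ x), card_univ]
        omega))
      subst this
      exact subset_univ P

lemma upper_g2 (P : Finset (Fin n)) :
    upperSets (g2 P) = P.image (fun x => ({x} : Finset (Fin n))) := by
  ext S
  simp only [mem_upperSets, IsMinUpper, g2, decide_eq_true_eq, decide_eq_false_iff_not,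
    mem_image]
  constructor
  · rintro ⟨⟨x, hx⟩, h2⟩
    rw [mem_inter] at hx
    refine ⟨x, hx.1, ?_⟩
    have hsub : ({x} : Finset (Fin n)) ⊆ S := singleton_subset_iff.mpr hx.2
    rcases eq_or_ssubset_of_subset hsub with h | h
    · exact h
    · exact absurd (h2 _ h) (by
        intro hc
        exact hc ⟨x, mem_inter.mpr ⟨hx.1, mem_singleton_self x⟩⟩)
  · rintro ⟨x, hxP, rfl⟩
    refine ⟨⟨x, mem_inter.mpr ⟨hxP, mem_singleton_self x⟩⟩, ?_⟩
    intro T hT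
    have : T = ∅ := by
      rw [ssubset_singleton_iff] at hT; exact hT
    subst this
    simp
lemma lower_g2 (P : Finset (Fin n)) : lowerSets (g2 P) = {Pᶜ} := by
  ext S
  simp only [mem_lowerSets, IsMaxLower, g2, decide_eq_true_eq, decide_eq_false_iff_not,
    mem_singleton, not_nonempty_iff_eq_empty]
  constructor
  · rintro ⟨h1, h2⟩
    have hsub : S ⊆ Pᶜ := by
      intro y hy
      rw [mem_compl]
      intro hyP
      exact notMem_empty y (h1 ▸ mem_inter.mpr ⟨hyP, hy⟩)
    rcases eq_or_ssubset_of_subset hsub with h | h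
    · exact h
    · exact absurd (h2 _ h) (by simp [← not_nonempty_iff_eq_empty.symm, inter_compl])
  · rintro rfl
    refine ⟨by simp [inter_compl], fun T hT => ?_⟩
    obtain ⟨y, hyT, hyc⟩ := exists_of_ssubset hT
    exact ⟨y, mem_inter.mpr ⟨by simpa using hyc, hyT⟩⟩

lemma bne_true {b : Bool} (h : b ≠ true) : b = false := by cases b <;> simp_all
lemma bne_false {b : Bool} (h : b ≠ false) : b = true := by cases b <;> simp_all

lemma erase_inj_univ : Function.Injective (fun x : Fin n => univ.erase x) := by
  intro x y h
  by_contra hne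
  have h2 : univ.erase x = univ.erase y := h
  have : x ∈ univ.erase y := mem_erase.mpr ⟨hne, mem_univ x⟩
  rw [← h2] at this
  exact (mem_erase.mp this).1 rfl

lemma mUL_g1 (P : Finset (Fin n)) : mUL (g1 P) = 1 + P.card := by
  rw [mUL, upper_g1, lower_g1, card_union_of_disjoint, card_singleton,
    card_image_of_injective _ erase_inj_univ]
  simp only [disjoint_singleton_left, mem_image]
  rintro ⟨x, hx, hP⟩
  exact (mem_erase.mp (hP ▸ hx)).1 rfl

lemma mUL_g2 (P : Finset (Fin n)) : mUL (g2 P) = P.card + 1 := by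
  rw [mUL, upper_g2, lower_g2, card_union_of_disjoint, card_singleton,
    card_image_of_injective _ (fun x y h => singleton_injective h)]
  simp only [disjoint_singleton_right, mem_image]
  rintro ⟨x, hx, hP⟩
  have : x ∈ Pᶜ := hP ▸ mem_singleton_self x
  exact (mem_compl.mp this) hx

lemma exists_minUpper {f : Finset (Fin n) → Bool} {T : Finset (Fin n)} (hT : f T = true) :
    ∃ S, IsMinUpper f S ∧ S ⊆ T := by
  obtain ⟨m, hm, hmin⟩ : ∃ m ∈ (T.powerset).filter (fun S => f S = true),
      ∀ x ∈ (T.powerset).filter (fun S => f S = true), ¬ x < m := by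
    obtain ⟨m, hm⟩ := Finset.exists_minimal
      (s := (T.powerset).filter (fun S => f S = true)) ⟨T, by simp [hT]⟩
    exact ⟨m, hm.prop, fun x hx hlt => lt_irrefl _ (lt_of_lt_of_le hlt (hm.2 hx hlt.le))⟩
  simp only [mem_filter, mem_powerset] at hm
  refine ⟨m, ⟨hm.2, fun T' hT' => ?_⟩, hm.1⟩
  by_contra h
  rw [Bool.not_eq_false] at h
  exact hmin T' (by simp [mem_filter, mem_powerset, hT'.subset.trans hm.1, h]) hT'

lemma exists_maxLower {f : Finset (Fin n) → Bool} {T : Finset (Fin n)} (hT : f T = false) :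
    ∃ S, IsMaxLower f S ∧ T ⊆ S := by
  obtain ⟨m, hm, hmax⟩ : ∃ m ∈ (univ : Finset (Finset (Fin n))).filter
      (fun S => T ⊆ S ∧ f S = false), ∀ x ∈ (univ : Finset (Finset (Fin n))).filter
      (fun S => T ⊆ S ∧ f S = false), ¬ m < x := by
    obtain ⟨m, hm⟩ := Finset.exists_maximal
      (s := (univ : Finset (Finset (Fin n))).filter (fun S => T ⊆ S ∧ f S = false))
      ⟨T, by simp [hT]⟩
    exact ⟨m, hm.prop, fun x hx hlt => lt_irrefl _ (lt_of_lt_of_le hlt (hm.2 hx hlt.le))⟩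
  simp only [mem_filter, mem_univ, true_and] at hm
  refine ⟨m, ⟨hm.2, fun T' hT' => ?_⟩, hm.1⟩
  by_contra h
  rw [Bool.not_eq_true] at h
  exact hmax T' (by simp [mem_filter, hm.1.trans hT'.subset, h]) hT'

lemma fTrue_iff {f : Finset (Fin n) → Bool} (hf : MonoBF f) (T : Finset (Fin n)) :
    f T = true ↔ ∃ S ∈ upperSets f, S ⊆ T := by
  constructor
  · intro hT
    obtain ⟨S, hS, hST⟩ := exists_minUpper hT
    exact ⟨S, mem_upperSets.mpr hS, hST⟩
  · rintro ⟨S, hS, hST⟩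
    have := hf hST
    rw [(mem_upperSets.mp hS).1] at this
    exact le_antisymm (Bool.le_true _) this

lemma fFalse_iff {f : Finset (Fin n) → Bool} (hf : MonoBF f) (T : Finset (Fin n)) :
    f T = false ↔ ∃ S ∈ lowerSets f, T ⊆ S := by
  constructor
  · intro hT
    obtain ⟨S, hS, hST⟩ := exists_maxLower hT
    exact ⟨S, mem_lowerSets.mpr hS, hST⟩
  · rintro ⟨S, hS, hST⟩
    have := hf hST
    rw [(mem_lowerSets.mp hS).1] at this
    exact le_antisymm this (Bool.false_le _)

lemma disj_UL (f : Finset (Fin n) → Bool) : Disjoint (upperSets f) (lowerSets f) := by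
  rw [disjoint_left]
  intro S hU hL
  have h1 := (mem_upperSets.mp hU).1
  have h2 := (mem_lowerSets.mp hL).1
  rw [h1] at h2; simp at h2

lemma char3 {f : Finset (Fin n) → Bool} (hf : MonoBF f) (hm : mUL f = 3) :
    (∃ P : Finset (Fin n), P.card = 2 ∧ f = g1 P) ∨
    (∃ P : Finset (Fin n), P.card = 2 ∧ f = g2 P) := by
  have hcard : (upperSets f).card + (lowerSets f).card = 3 := by
    rw [← card_union_of_disjoint (disj_UL f)]; exact hm
  -- upper sets nonempty
  have hUne : upperSets f ≠ ∅ := by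
    intro h
    have hfeq : f = g2 (∅ : Finset (Fin n)) := by
      funext T
      have : f T ≠ true := by
        intro hc; rw [fTrue_iff hf, h] at hc; simpa using hc
      simp [g2, bne_true this]
    rw [hfeq, mUL_g2] at hm; simp at hm
  have hLne : lowerSets f ≠ ∅ := by
    intro h
    have h' : f = g1 (∅ : Finset (Fin n)) := by
      funext T
      have : f T ≠ false := by
        intro hc; rw [fFalse_iff hf, h] at hc; simpa using hc
      simp [g1, bne_false this]
    rw [h', mUL_g1] at hm; simp at hm
  have hU1 := card_pos.mpr (nonempty_iff_ne_empty.mpr hUne)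
  have hL1 := card_pos.mpr (nonempty_iff_ne_empty.mpr hLne)
  rcases Nat.lt_or_ge (upperSets f).card 2 with hU | hU
  · -- card U = 1
    left
    have : (upperSets f).card = 1 := by omega
    obtain ⟨S, hS⟩ := card_eq_one.mp this
    have hfeq : f = g1 S := by
      funext T
      by_cases h : S ⊆ T
      · have : f T = true := (fTrue_iff hf T).mpr ⟨S, by simp [hS], h⟩
        simp [g1, this, h]
      · have : f T ≠ true := by
          intro hc
          rw [fTrue_iff hf T, hS] at hc
          simp only [mem_singleton] at hc
          obtain ⟨S', rfl, hsub⟩ := hc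
          exact h hsub
        simp [g1, bne_true this, h]
    rw [hfeq, mUL_g1] at hm
    exact ⟨S, by omega, hfeq⟩
  · -- card L = 1
    right
    have : (lowerSets f).card = 1 := by omega
    obtain ⟨A, hA⟩ := card_eq_one.mp this
    have hfeq : f = g2 Aᶜ := by
      funext T
      by_cases h : T ⊆ A
      · have hfT : f T = false := (fFalse_iff hf T).mpr ⟨A, by simp [hA], h⟩
        have : ¬ (Aᶜ ∩ T).Nonempty := by
          rintro ⟨y, hy⟩
          rw [mem_inter, mem_compl] at hy
          exact hy.1 (h hy.2)
        simp [g2, hfT, this]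
      · have hfT : f T ≠ false := by
          intro hc
          rw [fFalse_iff hf T, hA] at hc
          simp only [mem_singleton] at hc
          obtain ⟨A', rfl, hsub⟩ := hc
          exact h hsub
        obtain ⟨y, hyT, hyA⟩ := not_subset.mp h
        have : (Aᶜ ∩ T).Nonempty := ⟨y, mem_inter.mpr ⟨mem_compl.mpr hyA, hyT⟩⟩
        simp [g2, bne_false hfT, this]
    rw [hfeq, mUL_g2] at hm
    exact ⟨Aᶜ, by omega, hfeq⟩

lemma g1_inj : Function.Injective (g1 (n := n)) := by
  intro P Q h
  have h1 := congrFun h P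
  have h2 := congrFun h Q
  simp only [g1, decide_eq_decide] at h1 h2
  exact subset_antisymm (h2.mpr le_rfl) (h1.mp le_rfl)

lemma g2_inj : Function.Injective (g2 (n := n)) := by
  intro P Q h
  apply subset_antisymm <;> intro x hx
  · have := congrFun h {x}
    simp only [g2, decide_eq_decide] at this
    obtain ⟨y, hy⟩ := this.mp ⟨x, mem_inter.mpr ⟨hx, mem_singleton_self x⟩⟩
    rw [mem_inter, mem_singleton] at hy
    exact hy.2 ▸ hy.1
  · have := congrFun h {x}
    simp only [g2, decide_eq_decide] at this
    obtain ⟨y, hy⟩ := this.mpr ⟨x, mem_inter.mpr ⟨hx, mem_singleton_self x⟩⟩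
    rw [mem_inter, mem_singleton] at hy
    exact hy.2 ▸ hy.1

end

/-- `b_3(n) = 2 · C(n, 2)`. -/
theorem stmt7 (n : ℕ) : bCount n 3 = 2 * n.choose 2 := by
  have key : (univ.filter (fun f : Finset (Fin n) → Bool => MonoBF f ∧ mUL f = 3)) =
      ((univ.powersetCard 2).image g1) ∪ ((univ.powersetCard 2).image g2) := by
    ext f
    simp only [mem_filter, mem_union, mem_image, mem_powersetCard, mem_univ, true_and]
    constructor
    · rintro ⟨hf, hm⟩
      rcases char3 hf hm with ⟨P, hP, rfl⟩ | ⟨P, hP, rfl⟩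
      · exact Or.inl ⟨P, ⟨subset_univ P, hP⟩, rfl⟩
      · exact Or.inr ⟨P, ⟨subset_univ P, hP⟩, rfl⟩
    · rintro (⟨P, ⟨-, hP⟩, rfl⟩ | ⟨P, ⟨-, hP⟩, rfl⟩)
      · exact ⟨mono_g1 P, by rw [mUL_g1, hP]⟩
      · exact ⟨mono_g2 P, by rw [mUL_g2, hP]⟩
  have hdisj : Disjoint ((univ.powersetCard 2).image (g1 (n := n)))
      ((univ.powersetCard 2).image g2) := by
    rw [disjoint_left]
    rintro f h1 h2
    obtain ⟨P, hP, rfl⟩ := mem_image.mp h1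
    obtain ⟨Q, hQ, hPQ⟩ := mem_image.mp h2
    rw [mem_powersetCard] at hP hQ
    have hQne : Q.Nonempty := card_pos.mp (by rw [hQ.2]; norm_num)
    obtain ⟨x, hx⟩ := hQne
    have := congrFun hPQ {x}
    simp only [g1, g2, decide_eq_decide] at this
    have hsub : P ⊆ {x} := this.mp ⟨x, mem_inter.mpr ⟨hx, mem_singleton_self x⟩⟩
    have := card_le_card hsub
    rw [hP.2, card_singleton] at this
    omega
  rw [bCount, key, card_union_of_disjoint hdisj,
    card_image_of_injective _ g1_inj, card_image_of_injective _ g2_inj,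
    card_powersetCard, card_univ, Fintype.card_fin]
  ring
end

section
/- For n = 2, the decision tree that first queries {1}; on answer 0 queries {1,2} (on answer 0 outputs the all-zero function, on answer 1 queries {2} and outputs accordingly); and on answer 1 queries ∅ (on answer 1 outputs the all-one function, on answer 0 queries {2} and outputs accordingly) is a 2-competitive reconstruction algorithm. Combined with the lower bound c*_n ≥ 2, this gives c*_2 = 2. -/
open Finset

/-- The concrete decision tree for `n = 2` from the paper: query `{1}`; on answer `0`
query `{1,2}` (then possibly `{2}`); on answer `1` query `∅` (then possibly `{2}`). -/
def tree2 : DTree 2 :=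
  .node {0}
    (.node Finset.univ
      (.leaf (fun _ => false))
      (.node {1}
        (.leaf (fun T => decide (T = Finset.univ)))
        (.leaf (fun T => decide ((1 : Fin 2) ∈ T)))))
    (.node ∅
      (.node {1}
        (.leaf (fun T => decide ((0 : Fin 2) ∈ T)))
        (.leaf (fun T => decide T.Nonempty)))
      (.leaf (fun _ => true)))


lemma mono_eq_univ : MonoBF (n := 2) (fun T => decide (T = Finset.univ)) := by
  intro S T hST
  by_cases h : S = Finset.univ
  · subst h
    have : T = Finset.univ := Finset.univ_subset_iff.mp hST
    simp [this]
  · simp [h]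

lemma mono_nonempty : MonoBF (n := 2) (fun T => decide T.Nonempty) := by
  intro S T hST
  by_cases h : S.Nonempty
  · simp [h, h.mono hST]
  · simp [h]

lemma cost_pos (t : DTree 2) (hr : Reconstructs t) :
    2 ≤ t.cost (fun _ => false) ∨ 2 ≤ t.cost (fun _ => true) := by
  have hm0 : MonoBF (n := 2) (fun _ => false) := fun _ _ _ => le_rfl
  have hm1 : MonoBF (n := 2) (fun _ => true) := fun _ _ _ => le_rfl
  match t with
  | .leaf g =>
    exfalso
    have h0 := hr _ hm0
    have h1 := hr _ hm1
    simp only [DTree.run] at h0 h1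
    have := congrFun h0 ∅
    have := congrFun h1 ∅
    simp_all
  | .node S (.node S' a b) t1 =>
    left; simp [DTree.cost]
  | .node S t0 (.node S' a b) =>
    right; simp [DTree.cost]
  | .node S (.leaf g0) (.leaf g1) =>
    exfalso
    by_cases hS : S = Finset.univ
    · -- use nonempty indicator, goes right (S = univ nonempty)
      have hrun := hr _ mono_nonempty
      have hr1 := hr _ hm1
      simp only [DTree.run, hS] at hrun hr1
      rw [show (decide Finset.univ.Nonempty) = true by simp [Finset.univ_nonempty]] at hrun
      simp only [if_true] at hrun hr1
      have := congrFun hrun ∅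
      have := congrFun hr1 ∅
      simp_all
    · -- use (= univ) indicator, goes left
      have hrun := hr _ mono_eq_univ
      have hr0 := hr _ hm0
      simp only [DTree.run] at hrun hr0
      simp only [show (decide (S = Finset.univ)) = false by simp [hS]] at hrun
      simp only [if_false, Bool.false_eq_true] at hrun hr0
      have := congrFun hrun Finset.univ
      have := congrFun hr0 Finset.univ
      simp_all

lemma two_le_comp (c : ℝ) (hc : ∃ t : DTree 2, Reconstructs t ∧ Competitive t c) : 2 ≤ c := by
  obtain ⟨t, hr, hcomp⟩ := hc
  have hm0 : MonoBF (n := 2) (fun _ => false) := fun _ _ _ => le_rfl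
  have hm1 : MonoBF (n := 2) (fun _ => true) := fun _ _ _ => le_rfl
  have hmul0 : mUL (n := 2) (fun _ => false) = 1 := by decide
  have hmul1 : mUL (n := 2) (fun _ => true) = 1 := by decide
  rcases cost_pos t hr with h | h
  · have := hcomp _ hm0
    rw [hmul0] at this; push_cast at this
    have h2 : (2 : ℝ) ≤ (t.cost (fun _ => false) : ℝ) := by exact_mod_cast h
    linarith
  · have := hcomp _ hm1
    rw [hmul1] at this; push_cast at this
    have h2 : (2 : ℝ) ≤ (t.cost (fun _ => true) : ℝ) := by exact_mod_cast h
    linarith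

/-- The tree `tree2` is a `2`-competitive reconstruction algorithm; combined with the
lower bound `c*_n ≥ 2` this gives `c*_2 = 2`. -/
theorem stmt15 :
    Reconstructs tree2 ∧ Competitive tree2 2 ∧ cStar 2 = 2 := by
  have hrec : Reconstructs tree2 := by
    intro f hf
    revert hf
    revert f
    decide
  have hcomp : Competitive tree2 2 := by
    intro f hf
    have h : tree2.cost f ≤ 2 * mUL f := by revert f; decide
    exact_mod_cast h
  refine ⟨hrec, hcomp, ?_⟩
  have hmem : (2 : ℝ) ∈ {c : ℝ | ∃ t : DTree 2, Reconstructs t ∧ Competitive t c} :=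
    ⟨tree2, hrec, hcomp⟩
  have hlb : ∀ c ∈ {c : ℝ | ∃ t : DTree 2, Reconstructs t ∧ Competitive t c}, (2:ℝ) ≤ c :=
    fun c hc => two_le_comp c hc
  exact le_antisymm (csInf_le ⟨2, hlb⟩ hmem) (le_csInf ⟨2, hmem⟩ hlb)
end

section
/- Every deterministic reconstruction algorithm for monotone Boolean functions on 3 variables has competitivity at least 5/2; that is, c*_3 ≥ 5/2. -/
set_option maxRecDepth 8000


open Finset

/-! ### Auxiliary development -/


def encode3 (S : Finset (Fin 3)) : ℕ :=
  (if (0:Fin 3) ∈ S then 1 else 0) + (if (1:Fin 3) ∈ S then 2 else 0) +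
  (if (2:Fin 3) ∈ S then 4 else 0)

def mk3 (v : ℕ) : Finset (Fin 3) → Bool := fun S => v.testBit (encode3 S)

def feasible : ℕ → List (ℕ × ℕ) → ℕ → Bool
  | 0, _, _ => false
  | (fuel+1), C, d =>
    if C.any (fun p => decide (p.2 < d)) then false
    else if C.length ≤ 1 then true
    else (List.range 8).any (fun i =>
      !(C.filter (fun p => !(p.1.testBit i))).isEmpty &&
      !(C.filter (fun p => p.1.testBit i)).isEmpty &&
      feasible fuel (C.filter (fun p => !(p.1.testBit i))) (d+1) &&
      feasible fuel (C.filter (fun p => p.1.testBit i)) (d+1))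

def monoList : List (ℕ × ℕ) :=
  [(0, 2), (128, 9), (192, 7), (160, 7), (224, 9), (240, 4), (136, 7), (200, 9),
   (168, 9), (232, 14), (248, 9), (204, 4), (236, 9), (252, 7), (170, 4), (234, 9),
   (250, 7), (238, 7), (254, 9), (255, 2)]

lemma feasible_antitone (fuel : ℕ) : ∀ (C : List (ℕ × ℕ)) (d : ℕ),
    feasible fuel C (d+1) = true → feasible fuel C d = true := by
  induction fuel with
  | zero => intro C d h; simp [feasible] at h
  | succ fuel ih =>
    intro C d h
    rw [feasible] at h ⊢
    have ha : C.any (fun p => decide (p.2 < d+1)) = false := by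
      by_contra hx
      rw [Bool.not_eq_false] at hx
      rw [if_pos hx] at h
      exact absurd h (by simp)
    rw [if_neg (by rw [ha]; decide)] at h
    have ha' : C.any (fun p => decide (p.2 < d)) = false := by
      simp only [List.any_eq_false, decide_eq_true_eq] at ha ⊢
      intro p hp
      exact fun hlt => ha p hp (Nat.lt_succ_of_lt hlt)
    rw [if_neg (by rw [ha']; decide)]
    by_cases hlen : C.length ≤ 1
    · rw [if_pos hlen]
    · rw [if_neg hlen] at h ⊢
      rw [List.any_eq_true] at h ⊢
      obtain ⟨i, hi, hconj⟩ := h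
      refine ⟨i, hi, ?_⟩
      simp only [Bool.and_eq_true] at hconj ⊢
      exact ⟨⟨⟨hconj.1.1.1, hconj.1.1.2⟩, ih _ _ hconj.1.2⟩, ih _ _ hconj.2⟩

lemma encode3_lt (S : Finset (Fin 3)) : encode3 S < 8 := by
  unfold encode3; split <;> split <;> split <;> norm_num

lemma main_lemma : ∀ (t : DTree 3) (fuel : ℕ) (C : List (ℕ × ℕ)) (d : ℕ),
    C ≠ [] →
    C.Pairwise (fun p q => mk3 p.1 ≠ mk3 q.1) →
    C.length ≤ fuel →
    (∀ p ∈ C, t.run (mk3 p.1) = mk3 p.1) →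
    feasible fuel C d = false →
    ∃ p ∈ C, p.2 < d + t.cost (mk3 p.1) := by
  intro t
  induction t with
  | leaf g =>
    intro fuel C d hne hpw hlen hrun hfeas
    obtain ⟨fuel, rfl⟩ : ∃ m, fuel = m + 1 := by
      cases fuel with
      | zero => exact absurd (Nat.le_zero.mp hlen) (by simpa using hne)
      | succ m => exact ⟨m, rfl⟩
    rw [feasible] at hfeas
    by_cases ha : C.any (fun p => decide (p.2 < d)) = true
    · rw [List.any_eq_true] at ha
      obtain ⟨p, hp, hlt⟩ := ha
      exact ⟨p, hp, Nat.lt_of_lt_of_le (by simpa using hlt) (Nat.le_add_right d _)⟩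
    · rw [if_neg ha] at hfeas
      by_cases hlen1 : C.length ≤ 1
      · rw [if_pos hlen1] at hfeas; exact absurd hfeas (by simp)
      · -- two distinct functions both reconstructed by the same leaf: contradiction
        exfalso
        match C, hpw, hrun, hlen1 with
        | a :: b :: rest, hpw, hrun, _ =>
          have h1 : DTree.run (.leaf g) (mk3 a.1) = mk3 a.1 := hrun a (by simp)
          have h2 : DTree.run (.leaf g) (mk3 b.1) = mk3 b.1 := hrun b (by simp)
          have hne' : mk3 a.1 ≠ mk3 b.1 :=
            (List.pairwise_cons.mp hpw).1 b (by simp)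
          exact hne' (by rw [← h1, ← h2]; rfl)
  | node S t0 t1 ih0 ih1 =>
    intro fuel C d hne hpw hlen hrun hfeas
    set i := encode3 S with hidef
    by_cases h0 : (C.filter (fun p => !(p.1.testBit i))).isEmpty
    · -- every candidate answers true at S
      have hall : ∀ p ∈ C, p.1.testBit i = true := by
        intro p hp
        rw [List.isEmpty_iff, List.filter_eq_nil_iff] at h0
        have := h0 p hp
        simpa using this
      have hfeas' : feasible fuel C (d+1) = false := by
        by_contra hx
        rw [Bool.not_eq_false] at hx
        rw [feasible_antitone fuel C d hx] at hfeas
        exact absurd hfeas (by simp)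
      obtain ⟨p, hp, hlt⟩ := ih1 fuel C (d+1) hne hpw hlen
        (fun p hp => by
          have hr := hrun p hp
          have hv : mk3 p.1 S = true := hall p hp
          rw [DTree.run, if_pos hv] at hr
          exact hr) hfeas'
      refine ⟨p, hp, ?_⟩
      have hv : mk3 p.1 S = true := hall p hp
      rw [DTree.cost, if_pos hv]
      omega
    · by_cases h1 : (C.filter (fun p => p.1.testBit i)).isEmpty
      · -- every candidate answers false at S
        have hall : ∀ p ∈ C, p.1.testBit i = false := by
          intro p hp
          rw [List.isEmpty_iff, List.filter_eq_nil_iff] at h1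
          have := h1 p hp
          simpa using this
        have hfeas' : feasible fuel C (d+1) = false := by
          by_contra hx
          rw [Bool.not_eq_false] at hx
          rw [feasible_antitone fuel C d hx] at hfeas
          exact absurd hfeas (by simp)
        obtain ⟨p, hp, hlt⟩ := ih0 fuel C (d+1) hne hpw hlen
          (fun p hp => by
            have hr := hrun p hp
            have hv : mk3 p.1 S = false := hall p hp
            rw [DTree.run, if_neg (by simp [hv])] at hr
            exact hr) hfeas'
        refine ⟨p, hp, ?_⟩
        have hv : mk3 p.1 S = false := hall p hp
        rw [DTree.cost, if_neg (by simp [hv])]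
        omega
      · -- genuine split
        obtain ⟨fuel, rfl⟩ : ∃ m, fuel = m + 1 := by
          cases fuel with
          | zero => exact absurd (Nat.le_zero.mp hlen) (by simpa using hne)
          | succ m => exact ⟨m, rfl⟩
        -- extract witnesses in both halves
        rw [List.isEmpty_iff] at h0 h1
        have hx0 : ∃ x ∈ C, x.1.testBit i = false := by
          obtain ⟨a, ha⟩ := List.exists_mem_of_ne_nil _ h0
          rw [List.mem_filter] at ha
          exact ⟨a, ha.1, by simpa using ha.2⟩
        have hx1 : ∃ x ∈ C, x.1.testBit i = true := by
          obtain ⟨a, ha⟩ := List.exists_mem_of_ne_nil _ h1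
          rw [List.mem_filter] at ha
          exact ⟨a, ha.1, ha.2⟩
        obtain ⟨x0, hx0C, hx0b⟩ := hx0
        obtain ⟨x1, hx1C, hx1b⟩ := hx1
        have hlen2 : 1 < C.length := by
          match C, hx0C, hx1C with
          | [a], hx0C, hx1C =>
            simp only [List.mem_singleton] at hx0C hx1C
            rw [hx0C] at hx0b; rw [hx1C] at hx1b
            rw [hx0b] at hx1b; exact absurd hx1b (by simp)
          | a :: b :: rest, _, _ => simp
        rw [feasible] at hfeas
        have ha : C.any (fun p => decide (p.2 < d)) = true ∨
            C.any (fun p => decide (p.2 < d)) = false := by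
          cases C.any (fun p => decide (p.2 < d)) <;> simp
        rcases ha with ha | ha
        · rw [List.any_eq_true] at ha
          obtain ⟨p, hp, hlt⟩ := ha
          exact ⟨p, hp, Nat.lt_of_lt_of_le (by simpa using hlt) (Nat.le_add_right d _)⟩
        · rw [if_neg (by simp [ha]), if_neg (by omega)] at hfeas
          rw [List.any_eq_false] at hfeas
          have hdis := hfeas i (by simpa using encode3_lt S)
          simp only [Bool.and_eq_true, not_and, Bool.not_eq_true] at hdis
          have hC0ne : C.filter (fun p => !(p.1.testBit i)) ≠ [] := h0
          have hC1ne : C.filter (fun p => p.1.testBit i) ≠ [] := h1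
          have hie0 : (!(C.filter (fun p => !(p.1.testBit i))).isEmpty) = true := by
            simp [List.isEmpty_iff, hC0ne]
          have hie1 : (!(C.filter (fun p => p.1.testBit i)).isEmpty) = true := by
            simp [List.isEmpty_iff, hC1ne]
          have hsplit : feasible fuel (C.filter (fun p => !(p.1.testBit i))) (d+1) = false ∨
              feasible fuel (C.filter (fun p => p.1.testBit i)) (d+1) = false := by
            cases hf0 : feasible fuel (C.filter (fun p => !(p.1.testBit i))) (d+1) with
            | false => exact Or.inl rfl
            | true => exact Or.inr (hdis ⟨⟨hie0, hie1⟩, hf0⟩)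
          -- length bounds for the filtered lists
          have hlenf : ∀ (P : ℕ × ℕ → Bool) (x : ℕ × ℕ), x ∈ C → P x = false →
              (C.filter P).length ≤ fuel := by
            intro P x hxC hPx
            have hsub : (C.filter P).Sublist C := List.filter_sublist
            have hlt' : (C.filter P).length < C.length := by
              rcases Nat.lt_or_ge (C.filter P).length C.length with h | h
              · exact h
              · exfalso
                have := List.Sublist.eq_of_length hsub (Nat.le_antisymm (hsub.length_le) h)
                rw [← this] at hxC
                have := List.mem_filter.mp hxC
                rw [hPx] at this
                exact absurd this.2 (by simp)
            omega
          rcases hsplit with hf | hf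
          · obtain ⟨p, hp, hlt⟩ := ih0 fuel (C.filter (fun p => !(p.1.testBit i))) (d+1)
              hC0ne (hpw.sublist (List.filter_sublist))
              (hlenf _ x1 hx1C (by simp [hx1b]))
              (fun p hp => by
                have hpC := (List.mem_filter.mp hp).1
                have hv : mk3 p.1 S = false := by
                  have := (List.mem_filter.mp hp).2
                  simpa [mk3] using this
                have hr := hrun p hpC
                rw [DTree.run, if_neg (by simp [hv])] at hr
                exact hr) hf
            have hpC := (List.mem_filter.mp hp).1
            refine ⟨p, hpC, ?_⟩
            have hv : mk3 p.1 S = false := by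
              have := (List.mem_filter.mp hp).2
              simpa [mk3] using this
            rw [DTree.cost, if_neg (by simp [hv])]
            omega
          · obtain ⟨p, hp, hlt⟩ := ih1 fuel (C.filter (fun p => p.1.testBit i)) (d+1)
              hC1ne (hpw.sublist (List.filter_sublist))
              (hlenf _ x0 hx0C (by simp [hx0b]))
              (fun p hp => by
                have hpC := (List.mem_filter.mp hp).1
                have hv : mk3 p.1 S = true := (List.mem_filter.mp hp).2
                have hr := hrun p hpC
                rw [DTree.run, if_pos hv] at hr
                exact hr) hf
            have hpC := (List.mem_filter.mp hp).1
            refine ⟨p, hpC, ?_⟩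
            have hv : mk3 p.1 S = true := (List.mem_filter.mp hp).2
            rw [DTree.cost, if_pos hv]
            omega

/-- The witness tree: query every subset, then output the recorded answers. -/
def fullTree : List (Finset (Fin 3)) → (Finset (Fin 3) → Bool) → DTree 3
  | [], g => .leaf g
  | S :: qs, g => .node S (fullTree qs (Function.update g S false))
                          (fullTree qs (Function.update g S true))

lemma fullTree_cost : ∀ (qs : List (Finset (Fin 3))) (g f), (fullTree qs g).cost f = qs.length := by
  intro qs
  induction qs with
  | nil => intro g f; rfl
  | cons S qs ih =>
    intro g f
    rw [fullTree, DTree.cost]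
    cases hf : f S <;> simp [hf, ih]

lemma fullTree_run : ∀ (qs : List (Finset (Fin 3))) (g f),
    (∀ S, S ∈ qs ∨ g S = f S) → (fullTree qs g).run f = f := by
  intro qs
  induction qs with
  | nil =>
    intro g f h
    funext S
    exact (h S).resolve_left (by simp)
  | cons S qs ih =>
    intro g f h
    rw [fullTree, DTree.run]
    cases hf : f S
    · rw [if_neg (by simp [hf])]
      apply ih
      intro T
      by_cases hT : T = S
      · subst hT; right; rw [Function.update_self, hf]
      · rcases h T with hm | hm
        · rcases List.mem_cons.mp hm with h' | h'
          · exact absurd h' hT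
          · exact Or.inl h'
        · right; rw [Function.update_of_ne hT]; exact hm
    · rw [if_pos (by simp [hf])]
      apply ih
      intro T
      by_cases hT : T = S
      · subst hT; right; rw [Function.update_self, hf]
      · rcases h T with hm | hm
        · rcases List.mem_cons.mp hm with h' | h'
          · exact absurd h' hT
          · exact Or.inl h'
        · right; rw [Function.update_of_ne hT]; exact hm

def allQ : List (Finset (Fin 3)) := [∅, {0}, {1}, {2}, {0,1}, {0,2}, {1,2}, {0,1,2}]

lemma mUL_pos : ∀ f : Finset (Fin 3) → Bool, MonoBF f → 0 < mUL f := by decide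

set_option maxHeartbeats 4000000 in
lemma main_bound (t : DTree 3) (hrec : Reconstructs t) (c : ℝ) (hcomp : Competitive t c) :
    5 / 2 ≤ c := by
  have hmono : ∀ p ∈ monoList, MonoBF (mk3 p.1) := by decide
  have hbud : ∀ p ∈ monoList, 5 * mUL (mk3 p.1) ≤ 2 * (p.2 + 1) ∧ 0 < mUL (mk3 p.1) := by decide
  have hpair : monoList.Pairwise (fun p q => mk3 p.1 ≠ mk3 q.1) := by decide
  have hfeas : feasible 20 monoList 0 = false := by decide
  obtain ⟨p, hp, hlt⟩ := main_lemma t 20 monoList 0 (by decide) hpair (by decide)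
    (fun p hp => hrec _ (hmono p hp)) hfeas
  have hm := hmono p hp
  have hb := (hbud p hp).1
  have hmp := (hbud p hp).2
  -- 5 * m ≤ 2 * cost
  have h5 : 5 * mUL (mk3 p.1) ≤ 2 * t.cost (mk3 p.1) := by omega
  have hcost := hcomp (mk3 p.1) hm
  have h5R : (5 : ℝ) * (mUL (mk3 p.1) : ℝ) ≤ 2 * (t.cost (mk3 p.1) : ℝ) := by
    exact_mod_cast h5
  have hmR : (1 : ℝ) ≤ (mUL (mk3 p.1) : ℝ) := by exact_mod_cast hmp
  nlinarith [hcost, h5R, hmR]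

/-- Every deterministic reconstruction algorithm on `3` variables has competitivity at
least `5/2`; that is, `c*_3 ≥ 5/2`. -/
theorem stmt16 :
    (∀ t : DTree 3, Reconstructs t → ∀ c : ℝ, Competitive t c → 5 / 2 ≤ c) ∧
    (5 : ℝ) / 2 ≤ cStar 3 := by
  constructor
  · exact main_bound
  · unfold cStar
    apply le_csInf
    · refine ⟨8, fullTree allQ (fun _ => false), ?_, ?_⟩
      · intro f _
        apply fullTree_run
        intro S
        left
        have : ∀ S : Finset (Fin 3), S ∈ allQ := by decide
        exact this S
      · intro f hf
        rw [fullTree_cost]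
        have hmp : 0 < mUL f := mUL_pos f hf
        have : (1 : ℝ) ≤ (mUL f : ℝ) := by exact_mod_cast hmp
        show ((8 : ℕ) : ℝ) ≤ 8 * (mUL f : ℝ)
        push_cast
        nlinarith
    · rintro c ⟨t, hrec, hcomp⟩
      exact main_bound t hrec c hcomp
end

section
/- There exists a deterministic reconstruction algorithm for monotone Boolean functions on 3 variables with competitivity exactly 5/2; hence c*_3 = 5/2. -/
open Finset

namespace Stmt17Aux

/-- index of a subset of `Fin 3` as a bitmask position. -/
def idx (S : Finset (Fin 3)) : ℕ :=
  (if (0:Fin 3) ∈ S then 1 else 0) + (if (1:Fin 3) ∈ S then 2 else 0) +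
    (if (2:Fin 3) ∈ S then 4 else 0)

/-- Boolean function on subsets of `Fin 3` given by an 8-bit mask. -/
def ofMask (m : ℕ) : Finset (Fin 3) → Bool := fun S => m.testBit (idx S)

/-- The subset of `Fin 3` with bitmask `q`. -/
def qS (q : ℕ) : Finset (Fin 3) := Finset.univ.filter (fun i => q.testBit i.val)

/-- Masks of the 20 monotone Boolean functions on 3 variables. -/
def masks : List ℕ :=
  [0, 128, 136, 160, 168, 170, 192, 200, 204, 224, 232, 234, 236, 238, 240, 248, 250, 252, 254, 255]

/-- `m(f)` values of the 20 monotone functions. -/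
def mv : ℕ → ℕ
  | 0 => 1 | 128 => 4 | 136 => 3 | 160 => 3 | 168 => 4 | 170 => 2 | 192 => 3 | 200 => 4
  | 204 => 2 | 224 => 4 | 232 => 6 | 234 => 4 | 236 => 4 | 238 => 3 | 240 => 2 | 248 => 4
  | 250 => 3 | 252 => 3 | 254 => 4 | 255 => 1 | _ => 0

/-- Query budget for a function with mask `m` if the tree were better than `5/2`-competitive. -/
def limitM (m : ℕ) : ℕ := (5 * mv m - 1) / 2

/-- Bounded-depth feasibility search: can candidates `C` be separated, each `f` identified
within `limitM f` queries, `k` queries having already been asked? -/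
def fb : ℕ → List ℕ → ℕ → Bool
  | 0, _, _ => false
  | _+1, [], _ => true
  | _+1, [m], k => k ≤ limitM m
  | fuel+1, a :: b :: l, k =>
    (List.range 8).any fun q =>
      !((a :: b :: l).filter fun m => !(m.testBit q)).isEmpty &&
      (!((a :: b :: l).filter fun m => m.testBit q).isEmpty &&
      (fb fuel ((a :: b :: l).filter fun m => !(m.testBit q)) (k+1) &&
      fb fuel ((a :: b :: l).filter fun m => m.testBit q) (k+1)))

/-- Abstract feasibility (no fuel). -/
inductive FB : List ℕ → ℕ → Prop
  | nil (k : ℕ) : FB [] k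
  | single (m k : ℕ) : k ≤ limitM m → FB [m] k
  | split (C : List ℕ) (k q : ℕ) (hq : q < 8)
      (h0 : (C.filter fun m => !(m.testBit q)) ≠ [])
      (h1 : (C.filter fun m => m.testBit q) ≠ [])
      (f0 : FB (C.filter fun m => !(m.testBit q)) (k+1))
      (f1 : FB (C.filter fun m => m.testBit q) (k+1)) : FB C k

theorem FB_le {C : List ℕ} {k' : ℕ} (h : FB C k') : ∀ k ≤ k', FB C k := by
  induction h with
  | nil k => exact fun k _ => .nil k
  | single m k' h => exact fun k hk => .single m k (le_trans hk h)
  | split C k' q hq h0 h1 f0 f1 ih0 ih1 =>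
      exact fun k hk => .split C k q hq h0 h1 (ih0 _ (by omega)) (ih1 _ (by omega))

theorem FB_fb {C : List ℕ} {k : ℕ} (h : FB C k) :
    ∀ fuel, C.length < fuel → fb fuel C k = true := by
  induction h with
  | nil k => intro fuel hf; cases fuel with | zero => omega | succ n => rfl
  | single m k h => intro fuel hf; cases fuel with
      | zero => omega
      | succ n => simpa [fb] using h
  | split C k q hq h0 h1 f0 f1 ih0 ih1 =>
      intro fuel hf
      have hlen := List.length_eq_length_filter_add (l := C) (fun m => m.testBit q)
      have e0 : (C.filter (!(fun m => m.testBit q) ·)) = (C.filter fun m => !(m.testBit q)) := rfl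
      rw [e0] at hlen
      have l0 : 0 < (C.filter fun m => !(m.testBit q)).length := List.length_pos_iff.mpr h0
      have l1 : 0 < (C.filter fun m => m.testBit q).length := List.length_pos_iff.mpr h1
      have hne : ∀ (L : List ℕ), L ≠ [] → (!L.isEmpty) = true := by
        intro L hL
        cases L with
        | nil => exact absurd rfl hL
        | cons x xs => rfl
      rcases C with _ | ⟨a, _ | ⟨b, l⟩⟩
      · simp at l0
      · have hone : (a :: ([] : List ℕ)).length = 1 := rfl
        omega
      · cases fuel with
        | zero => omega
        | succ n =>
          show List.any _ _ = true
          rw [List.any_eq_true]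
          refine ⟨q, List.mem_range.mpr hq, ?_⟩
          simp only [Bool.and_eq_true]
          have hlt0 : (List.filter (fun m => !(m.testBit q)) (a :: b :: l)).length < n := by omega
          have hlt1 : (List.filter (fun m => m.testBit q) (a :: b :: l)).length < n := by omega
          exact ⟨hne _ h0, hne _ h1, ih0 n hlt0, ih1 n hlt1⟩

end Stmt17Aux

namespace Stmt17Aux

set_option maxRecDepth 40000

/-- Every monotone Boolean function on 3 variables is one of the 20. -/
theorem mono_mem : ∀ f : Finset (Fin 3) → Bool, MonoBF f → ∃ m ∈ masks, f = ofMask m := by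
  decide

theorem mask_facts : ∀ m ∈ masks, MonoBF (ofMask m) ∧ mUL (ofMask m) = mv m ∧ 0 < mv m := by
  decide

theorem ofMask_inj : ∀ m ∈ masks, ∀ m' ∈ masks, ofMask m = ofMask m' → m = m' := by
  decide

theorem masks_nodup : masks.Nodup := by decide

theorem idx_lt (S : Finset (Fin 3)) : idx S < 8 := by
  unfold idx; split <;> split <;> split <;> omega

set_option maxHeartbeats 4000000 in
theorem fb_false : fb 21 masks 0 = false := by decide

/-- The explicit -competitive reconstruction tree. -/
def T : DTree 3 := (DTree.node (qS 1) (DTree.node (qS 7) (DTree.leaf (ofMask 0)) (DTree.node (qS 2) (DTree.node (qS 3) (DTree.node (qS 4) (DTree.node (qS 5) (DTree.node (qS 6) (DTree.leaf (ofMask 128)) (DTree.leaf (ofMask 192))) (DTree.node (qS 6) (DTree.leaf (ofMask 160)) (DTree.leaf (ofMask 224)))) (DTree.leaf (ofMask 240))) (DTree.node (qS 4) (DTree.node (qS 5) (DTree.node (qS 6) (DTree.leaf (ofMask 136)) (DTree.leaf (ofMask 200))) (DTree.node (qS 6) (DTree.leaf (ofMask 168)) (DTree.leaf (ofMask 232))))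 (DTree.leaf (ofMask 248)))) (DTree.node (qS 4) (DTree.node (qS 5) (DTree.leaf (ofMask 204)) (DTree.leaf (ofMask 236))) (DTree.leaf (ofMask 252))))) (DTree.node (qS 0) (DTree.node (qS 2) (DTree.node (qS 4) (DTree.node (qS 6) (DTree.leaf (ofMask 170)) (DTree.leaf (ofMask 234))) (DTree.leaf (ofMask 250))) (DTree.node (qS 4) (DTree.leaf (ofMask 238)) (DTree.leaf (ofMask 254)))) (DTree.leaf (ofMask 255))))

theorem T_run : ∀ m ∈ masks, T.run (ofMask m) = ofMask m := by decide

theorem T_cost : ∀ m ∈ masks, 2 * T.cost (ofMask m) ≤ 5 * mv m := by decide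

theorem T_tight : T.cost (ofMask 170) = 5 ∧ (170:ℕ) ∈ masks := by decide

/-- Any reconstructing tree yields abstract feasibility. -/
theorem tree_FB : ∀ t : DTree 3, ∀ C : List ℕ, ∀ k : ℕ, C.Nodup → (∀ m ∈ C, m ∈ masks) →
    (∀ m ∈ C, t.run (ofMask m) = ofMask m ∧ t.cost (ofMask m) + k ≤ limitM m) → FB C k := by
  intro t
  induction t with
  | leaf g =>
    intro C k hnd hmem hcond
    match C with
    | [] => exact .nil k
    | [a] =>
      have := (hcond a (by simp)).2
      simp only [DTree.cost] at this
      exact .single a k (by omega)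
    | a :: b :: l =>
      exfalso
      have ha : g = ofMask a := (hcond a (by simp)).1
      have hb : g = ofMask b := (hcond b (by simp)).1
      have hab : a = b := ofMask_inj a (hmem a (by simp)) b (hmem b (by simp)) (ha ▸ hb)
      subst hab
      exact (List.nodup_cons.mp hnd).1 List.mem_cons_self
  | node S t0 t1 ih0 ih1 =>
    intro C k hnd hmem hcond
    have hbit : ∀ m, ofMask m S = m.testBit (idx S) := fun m => rfl
    by_cases h0 : (C.filter fun m => !(m.testBit (idx S))) = []
    · -- every candidate answers true; the query is wasted
      have hall : ∀ m ∈ C, m.testBit (idx S) = true := by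
        intro m hm
        have := List.filter_eq_nil_iff.mp h0 m hm
        simpa using this
      have : FB C (k+1) := by
        apply ih1 C (k+1) hnd hmem
        intro m hm
        have hc := hcond m hm
        have hS : ofMask m S = true := hall m hm
        constructor
        · have := hc.1; simpa [DTree.run, hS] using this
        · have := hc.2; simp only [DTree.cost, hS, if_true] at this; omega
      exact FB_le this k (by omega)
    · by_cases h1 : (C.filter fun m => m.testBit (idx S)) = []
      · have hall : ∀ m ∈ C, m.testBit (idx S) = false := by
          intro m hm
          have := List.filter_eq_nil_iff.mp h1 m hm
          simpa using this
        have : FB C (k+1) := by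
          apply ih0 C (k+1) hnd hmem
          intro m hm
          have hc := hcond m hm
          have hS : ofMask m S = false := hall m hm
          constructor
          · have := hc.1; simpa [DTree.run, hS] using this
          · have := hc.2; simp only [DTree.cost, hS, if_false, Bool.false_eq_true] at this; omega
        exact FB_le this k (by omega)
      · refine .split C k (idx S) (idx_lt S) h0 h1 ?_ ?_
        · apply ih0 _ _ (hnd.filter _) (fun m hm => hmem m (List.mem_filter.mp hm).1)
          intro m hm
          obtain ⟨hmC, hmb⟩ := List.mem_filter.mp hm
          have hS : ofMask m S = false := by
            have : (m.testBit (idx S)) = false := by simpa using hmb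
            simpa [hbit] using this
          have hc := hcond m hmC
          constructor
          · have := hc.1; simpa [DTree.run, hS] using this
          · have := hc.2; simp only [DTree.cost, hS, if_false, Bool.false_eq_true] at this; omega
        · apply ih1 _ _ (hnd.filter _) (fun m hm => hmem m (List.mem_filter.mp hm).1)
          intro m hm
          obtain ⟨hmC, hmb⟩ := List.mem_filter.mp hm
          have hS : ofMask m S = true := by simpa [hbit] using hmb
          have hc := hcond m hmC
          constructor
          · have := hc.1; simpa [DTree.run, hS] using this
          · have := hc.2; simp only [DTree.cost, hS, if_true] at this; omega

/-- The lower bound: any competitivity achievable by a reconstructing tree is at least 5/2. -/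
theorem lower_bound (c : ℝ) (t : DTree 3) (hr : Reconstructs t) (hc : Competitive t c) :
    5 / 2 ≤ c := by
  by_contra hlt
  push_neg at hlt
  have hcond : ∀ m ∈ masks, t.run (ofMask m) = ofMask m ∧ t.cost (ofMask m) + 0 ≤ limitM m := by
    intro m hm
    obtain ⟨hmono, hmul, hpos⟩ := mask_facts m hm
    refine ⟨hr _ hmono, ?_⟩
    have h1 := hc _ hmono
    rw [hmul] at h1
    have hmr : (0:ℝ) < (mv m : ℝ) := by exact_mod_cast hpos
    have h2 : (t.cost (ofMask m) : ℝ) < 5 / 2 * (mv m : ℝ) :=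
      lt_of_le_of_lt h1 (mul_lt_mul_of_pos_right hlt hmr)
    have h3 : (2 * t.cost (ofMask m) : ℝ) < (5 * mv m : ℝ) := by linarith
    have h4 : 2 * t.cost (ofMask m) < 5 * mv m := by exact_mod_cast h3
    unfold limitM; omega
  have hFB : FB masks 0 := tree_FB t masks 0 masks_nodup (fun m hm => hm) hcond
  have := FB_fb hFB 21 (by decide)
  rw [fb_false] at this
  exact Bool.false_ne_true this

end Stmt17Aux

set_option maxRecDepth 40000 in
/-- There is a reconstruction algorithm on `3` variables with competitivity exactly
`5/2`; hence `c*_3 = 5/2`. -/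
theorem stmt17 :
    (∃ t : DTree 3, Reconstructs t ∧ Competitive t (5 / 2) ∧
      ∃ f : Finset (Fin 3) → Bool, MonoBF f ∧ (t.cost f : ℝ) = 5 / 2 * mUL f) ∧
    cStar 3 = 5 / 2 := by
  open Stmt17Aux in
  have hrec : Reconstructs T := by
    intro f hf
    obtain ⟨m, hm, rfl⟩ := mono_mem f hf
    exact T_run m hm
  have hcomp : Competitive T (5 / 2) := by
    intro f hf
    obtain ⟨m, hm, rfl⟩ := mono_mem f hf
    have h1 := T_cost m hm
    have h2 := (mask_facts m hm).2.1
    rw [h2]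
    have h3 : ((2 * T.cost (ofMask m) : ℕ) : ℝ) ≤ ((5 * mv m : ℕ) : ℝ) := by exact_mod_cast h1
    push_cast at h3 ⊢
    linarith
  have htight : ∃ f : Finset (Fin 3) → Bool, MonoBF f ∧ (T.cost f : ℝ) = 5 / 2 * mUL f := by
    refine ⟨ofMask 170, (mask_facts 170 T_tight.2).1, ?_⟩
    rw [T_tight.1, (mask_facts 170 T_tight.2).2.1]
    norm_num [mv]
  constructor
  · exact ⟨T, hrec, hcomp, htight⟩
  · unfold cStar
    apply le_antisymm
    · exact csInf_le ⟨5 / 2, fun c ⟨t, h1, h2⟩ => lower_bound c t h1 h2⟩ ⟨T, hrec, hcomp⟩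
    · exact le_csInf ⟨5 / 2, T, hrec, hcomp⟩ (fun c ⟨t, h1, h2⟩ => lower_bound c t h1 h2)
end
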